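/- Let f : ℝ → ℂ be defined by f(r) := ∫_{−π}^{π} (1/2π)·e^{−i r cos p} dp (the Bessel-type oscillatory integral). There exists a constant C₁ such that |f(r)| ≤ C₁·(1 + |r|)^{−1/2} for all r ∈ ℝ. -/

import Mathlib

open MeasureTheory intervalIntegral Real

noncomputable def vv (r p : ℝ) : ℂ := Complex.exp (-(Complex.I * (r:ℂ) * (Real.cos p : ℂ)))

lemma vv_norm (r p : ℝ) : ‖vv r p‖ = 1 := by
  rw [vv, Complex.norm_exp]; norm_num [Complex.exp_re]

lemma vv_cont (r : ℝ) : Continuous (vv r) := by unfold vv; fun_prop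

lemma vv_intable (r a b : ℝ) : IntervalIntegrable (vv r) volume a b :=
  (vv_cont r).intervalIntegrable a b

lemma vv_hasDeriv (r p : ℝ) :
    HasDerivAt (vv r) (Complex.I * r * Real.sin p * vv r p) p := by
  have h1 : HasDerivAt (fun p : ℝ => -(Complex.I * (r:ℂ) * (Real.cos p : ℂ)))
      (Complex.I * r * Real.sin p) p := by
    have := (((Real.hasDerivAt_cos p).ofReal_comp).const_mul (Complex.I * r)).neg
    refine this.congr_deriv (Eq.symm ?_)
    push_cast; ring
  have := h1.cexp
  refine this.congr_deriv (Eq.symm ?_)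
  rw [vv]; ring

lemma oscA (r a b : ℝ) (hr : r ≠ 0) (ha : 0 < a) (hab : a ≤ b) (hb : b ≤ π/2) :
    ‖∫ p in a..b, vv r p‖ ≤ 3 / (|r| * Real.sin a) := by
  have hrabs : (0:ℝ) < |r| := abs_pos.2 hr
  set c : ℝ → ℂ := fun p => Complex.I * r * (Real.sin p : ℂ) with hc_def
  have huicc : Set.uIcc a b = Set.Icc a b := Set.uIcc_of_le hab
  have hsinpos : ∀ x ∈ Set.Icc a b, 0 < Real.sin x := fun x hx =>
    Real.sin_pos_of_pos_of_lt_pi (lt_of_lt_of_le ha hx.1)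
      (lt_of_le_of_lt (hx.2.trans hb) (by linarith [Real.pi_pos]))
  have hsina : 0 < Real.sin a := hsinpos a ⟨le_refl a, hab⟩
  have hsinb : 0 < Real.sin b := hsinpos b ⟨hab, le_refl b⟩
  have hsin_ge : ∀ x ∈ Set.Icc a b, Real.sin a ≤ Real.sin x := by
    intro x hx
    have h2 : a ∈ Set.Icc (-(π/2)) (π/2) :=
      ⟨by linarith [Real.pi_pos], by linarith [hx.1.trans hx.2, hb]⟩
    have h3 : x ∈ Set.Icc (-(π/2)) (π/2) :=
      ⟨by linarith [ha.le.trans hx.1, Real.pi_pos], hx.2.trans hb⟩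
    exact Real.strictMonoOn_sin.monotoneOn h2 h3 hx.1
  have hcne : ∀ x ∈ Set.Icc a b, c x ≠ 0 := by
    intro x hx
    simp only [hc_def]
    refine mul_ne_zero (mul_ne_zero Complex.I_ne_zero ?_) ?_
    · exact_mod_cast Complex.ofReal_ne_zero.2 hr
    · exact_mod_cast Complex.ofReal_ne_zero.2 (hsinpos x hx).ne'
  have hcabs : ∀ x, ‖c x‖ = |r| * |Real.sin x| := by
    intro x
    simp only [hc_def, norm_mul, Complex.norm_I, Complex.norm_real, Real.norm_eq_abs, one_mul]
  have hcderiv : ∀ x, HasDerivAt c (Complex.I * r * (Real.cos x : ℂ)) x := by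
    intro x
    have := ((Real.hasDerivAt_sin x).ofReal_comp).const_mul (Complex.I * (r:ℂ))
    convert this using 1
  set u : ℝ → ℂ := fun p => (c p)⁻¹ with hu_def
  set u' : ℝ → ℂ := fun p => -(Complex.I * r * (Real.cos p : ℂ)) / (c p) ^ 2 with hu'_def
  have hu : ∀ x ∈ Set.uIcc a b, HasDerivAt u (u' x) x := by
    intro x hx
    rw [huicc] at hx
    have h1 : HasDerivAt (fun z : ℂ => z⁻¹) (-(c x ^ 2)⁻¹) (c x) :=
      hasDerivAt_inv (hcne x hx)
    have h2 := h1.scomp x (hcderiv x)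
    refine h2.congr_deriv (Eq.symm ?_)
    simp only [hu'_def, smul_eq_mul]
    field_simp
  have hv : ∀ x ∈ Set.uIcc a b, HasDerivAt (vv r) (c x * vv r x) x := by
    intro x _
    have := vv_hasDeriv r x
    convert this using 1
  have hcont_c : Continuous c := by unfold c; fun_prop
  have hu'cont : ContinuousOn u' (Set.uIcc a b) := by
    rw [huicc]
    apply ContinuousOn.div
    · fun_prop
    · exact (hcont_c.pow 2).continuousOn
    · intro x hx; exact pow_ne_zero 2 (hcne x hx)
  have hu'int : IntervalIntegrable u' volume a b := hu'cont.intervalIntegrable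
  have hv'int : IntervalIntegrable (fun x => c x * vv r x) volume a b :=
    (hcont_c.mul (vv_cont r)).intervalIntegrable a b
  have ibp := intervalIntegral.integral_mul_deriv_eq_deriv_mul hu hv hu'int hv'int
  have heq : ∀ x ∈ Set.uIcc a b, vv r x = u x * (c x * vv r x) := by
    intro x hx
    rw [huicc] at hx
    rw [hu_def]
    rw [inv_mul_cancel_left₀ (hcne x hx)]
  have hre : (∫ p in a..b, vv r p) = ∫ x in a..b, u x * (c x * vv r x) :=
    intervalIntegral.integral_congr heq
  rw [hre, ibp]
  have hb1 : ‖u b * vv r b‖ ≤ 1 / (|r| * Real.sin a) := by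
    rw [norm_mul, vv_norm, mul_one, hu_def, norm_inv, hcabs]
    rw [abs_of_pos hsinb, one_div]
    apply inv_anti₀ (by positivity)
    exact mul_le_mul_of_nonneg_left (hsin_ge b ⟨hab, le_refl b⟩) hrabs.le
  have hb2 : ‖u a * vv r a‖ ≤ 1 / (|r| * Real.sin a) := by
    rw [norm_mul, vv_norm, mul_one, hu_def, norm_inv, hcabs]
    rw [abs_of_pos hsina, one_div]
  have hnorm_u' : ∀ x ∈ Set.Icc a b,
      ‖u' x * vv r x‖ = Real.cos x / (|r| * Real.sin x ^ 2) := by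
    intro x hx
    have hcosx : 0 ≤ Real.cos x := Real.cos_nonneg_of_mem_Icc
      ⟨by linarith [ha.le.trans hx.1, Real.pi_pos], hx.2.trans hb⟩
    rw [norm_mul, vv_norm, mul_one, hu'_def, norm_div, norm_neg, norm_mul, norm_mul,
      Complex.norm_I, Complex.norm_real, Complex.norm_real, Real.norm_eq_abs, Real.norm_eq_abs, norm_pow, hcabs,
      abs_of_pos ((hsinpos x hx)), abs_of_nonneg hcosx]
    have h1 : (0:ℝ) < Real.sin x := hsinpos x hx
    rw [mul_pow]
    field_simp
  have hFTC : (∫ x in a..b, Real.cos x / (|r| * Real.sin x ^ 2))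
      = -(|r| * Real.sin b)⁻¹ - -(|r| * Real.sin a)⁻¹ := by
    apply intervalIntegral.integral_eq_sub_of_hasDerivAt
    · intro x hx
      rw [huicc] at hx
      have hs := hsinpos x hx
      have h1 : HasDerivAt (fun y => |r| * Real.sin y) (|r| * Real.cos x) x :=
        (Real.hasDerivAt_sin x).const_mul |r|
      have := (h1.inv (by positivity)).neg
      refine this.congr_deriv (Eq.symm ?_)
      rw [neg_div, neg_neg, mul_pow]
      field_simp
    · apply ContinuousOn.intervalIntegrable
      rw [huicc]
      apply ContinuousOn.div Real.continuous_cos.continuousOn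
      · fun_prop
      · intro x hx
        have := hsinpos x hx
        positivity
  have hint : ‖∫ x in a..b, u' x * vv r x‖ ≤ 1 / (|r| * Real.sin a) := by
    have h1 : ‖∫ x in a..b, u' x * vv r x‖ ≤ ∫ x in a..b, ‖u' x * vv r x‖ :=
      intervalIntegral.norm_integral_le_integral_norm hab
    have h2 : (∫ x in a..b, ‖u' x * vv r x‖)
        = ∫ x in a..b, Real.cos x / (|r| * Real.sin x ^ 2) := by
      apply intervalIntegral.integral_congr
      intro x hx
      rw [huicc] at hx
      exact hnorm_u' x hx
    rw [h2, hFTC] at h1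
    have h3 : (0:ℝ) < (|r| * Real.sin b)⁻¹ := by positivity
    calc ‖∫ x in a..b, u' x * vv r x‖
        ≤ -(|r| * Real.sin b)⁻¹ - -(|r| * Real.sin a)⁻¹ := h1
      _ ≤ (|r| * Real.sin a)⁻¹ := by linarith
      _ = 1 / (|r| * Real.sin a) := (one_div _).symm
  calc ‖u b * vv r b - u a * vv r a - ∫ x in a..b, u' x * vv r x‖
      ≤ ‖u b * vv r b - u a * vv r a‖
        + ‖∫ x in a..b, u' x * vv r x‖ := norm_sub_le _ _
    _ ≤ ‖u b * vv r b‖ + ‖u a * vv r a‖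
        + ‖∫ x in a..b, u' x * vv r x‖ := by
        have := norm_sub_le (u b * vv r b) (u a * vv r a)
        linarith
    _ ≤ 3 / (|r| * Real.sin a) := by
        have h3 : (3:ℝ) / (|r| * Real.sin a)
            = 1 / (|r| * Real.sin a) + 1 / (|r| * Real.sin a) + 1 / (|r| * Real.sin a) := by
          ring
        rw [h3]
        exact add_le_add (add_le_add hb1 hb2) hint

lemma trivial_bound (r a b : ℝ) (h : a ≤ b) :
    ‖∫ p in a..b, vv r p‖ ≤ b - a := by
  have := intervalIntegral.norm_integral_le_of_norm_le_const (C := 1) (f := vv r) (a := a) (b := b)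
    (fun x _ => by rw [vv_norm])
  simpa [abs_of_nonneg (sub_nonneg.2 h)] using this

lemma oscB (r a b : ℝ) (hr : r ≠ 0) (ha : π/2 ≤ a) (hab : a ≤ b) (hb : b < π) :
    ‖∫ p in a..b, vv r p‖ ≤ 3 / (|r| * Real.sin b) := by
  have h1 : (∫ p in a..b, vv r p) = ∫ x in a..b, vv (-r) (π - x) := by
    apply intervalIntegral.integral_congr
    intro x _
    show vv r x = vv (-r) (π - x)
    unfold vv
    rw [Real.cos_pi_sub]
    congr 1
    push_cast
    ring
  rw [h1, intervalIntegral.integral_comp_sub_left (vv (-r)) π]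
  have hpi := Real.pi_pos
  have := oscA (-r) (π - b) (π - a) (neg_ne_zero.2 hr) (by linarith) (by linarith) (by linarith)
  rwa [abs_neg, Real.sin_pi_sub] at this

lemma I_eq (r : ℝ) :
    (∫ p in (-π)..π, vv r p) = 2 * ∫ p in (0:ℝ)..π, vv r p := by
  have h0 := intervalIntegral.integral_comp_neg (a := (0:ℝ)) (b := π) (vv r)
  simp only [neg_zero] at h0
  have h1 : (∫ p in (-π)..(0:ℝ), vv r p) = ∫ p in (0:ℝ)..π, vv r p := by
    rw [← h0]
    apply intervalIntegral.integral_congr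
    intro x _
    simp only [vv, Real.cos_neg]
  rw [← intervalIntegral.integral_add_adjacent_intervals (vv_intable r (-π) 0)
    (vv_intable r 0 π), h1]
  ring

lemma main_bound (r : ℝ) (hr : 1 ≤ |r|) :
    ‖∫ p in (-π)..π, vv r p‖ ≤ 20 * |r| ^ (-(1/2) : ℝ) := by
  have hpi := Real.pi_gt_three
  have hrne : r ≠ 0 := by intro h; rw [h] at hr; simp at hr; linarith
  set ε := |r| ^ (-(1/2) : ℝ) with hε
  have hrpos : 0 < |r| := lt_of_lt_of_le one_pos hr
  have hεpos : 0 < ε := Real.rpow_pos_of_pos hrpos _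
  have hε1 : ε ≤ 1 := Real.rpow_le_one_of_one_le_of_nonpos hr (by norm_num)
  have hεsq : ε * ε * |r| = 1 := by
    have h2 : ε * ε = |r|⁻¹ := by
      rw [hε, ← Real.rpow_add hrpos]
      norm_num [Real.rpow_neg_one]
    rw [h2]
    field_simp
  have hεhalf : ε ≤ π/2 := by linarith
  have hsin : 3/4*ε ≤ Real.sin ε := by nlinarith [Real.sin_gt_sub_cube hεpos, pow_le_pow_of_le_one hεpos.le hε1 (by norm_num : 1 ≤ 3)]
  have hsinpos : 0 < Real.sin ε := lt_of_lt_of_le (by nlinarith) hsin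
  have h34 : 3 / (|r| * Real.sin ε) ≤ 4 * ε := by
    rw [div_le_iff₀ (by positivity)]
    nlinarith [mul_le_mul_of_nonneg_left hsin (by positivity : (0:ℝ) ≤ 4*ε*|r|)]
  have hA : ‖∫ p in (0:ℝ)..ε, vv r p‖ ≤ ε := by
    have := trivial_bound r 0 ε hεpos.le; linarith
  have hD : ‖∫ p in (π-ε)..π, vv r p‖ ≤ ε := by
    have := trivial_bound r (π-ε) π (by linarith); linarith
  have hB : ‖∫ p in ε..(π/2), vv r p‖ ≤ 4 * ε :=
    le_trans (oscA r ε (π/2) hrne hεpos hεhalf (le_refl _)) h34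
  have hC : ‖∫ p in (π/2)..(π-ε), vv r p‖ ≤ 4 * ε := by
    have := oscB r (π/2) (π-ε) hrne (le_refl _) (by linarith) (by linarith)
    rw [Real.sin_pi_sub] at this
    linarith
  have hsplit : (∫ p in (0:ℝ)..π, vv r p)
      = (∫ p in (0:ℝ)..ε, vv r p) + (∫ p in ε..(π/2), vv r p)
        + (∫ p in (π/2)..(π-ε), vv r p) + (∫ p in (π-ε)..π, vv r p) := by
    rw [intervalIntegral.integral_add_adjacent_intervals (vv_intable r 0 ε)
      (vv_intable r ε (π/2)),
      intervalIntegral.integral_add_adjacent_intervals (vv_intable r 0 (π/2))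
      (vv_intable r (π/2) (π-ε)),
      intervalIntegral.integral_add_adjacent_intervals (vv_intable r 0 (π-ε))
      (vv_intable r (π-ε) π)]
  rw [I_eq, hsplit]
  rw [norm_mul]
  have h2 : ‖(2:ℂ)‖ = 2 := by norm_num
  rw [h2]
  have htri : ‖(∫ p in (0:ℝ)..ε, vv r p) + (∫ p in ε..(π/2), vv r p)
        + (∫ p in (π/2)..(π-ε), vv r p) + (∫ p in (π-ε)..π, vv r p)‖ ≤ 10 * ε := by
    calc ‖_‖ ≤ ‖(∫ p in (0:ℝ)..ε, vv r p) + (∫ p in ε..(π/2), vv r p)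
          + (∫ p in (π/2)..(π-ε), vv r p)‖ + ‖∫ p in (π-ε)..π, vv r p‖ :=
        norm_add_le _ _
      _ ≤ ‖(∫ p in (0:ℝ)..ε, vv r p) + (∫ p in ε..(π/2), vv r p)‖
          + ‖∫ p in (π/2)..(π-ε), vv r p‖
          + ‖∫ p in (π-ε)..π, vv r p‖ := by
          have := norm_add_le ((∫ p in (0:ℝ)..ε, vv r p) + (∫ p in ε..(π/2), vv r p))
            (∫ p in (π/2)..(π-ε), vv r p)
          linarith
      _ ≤ ‖∫ p in (0:ℝ)..ε, vv r p‖ + ‖∫ p in ε..(π/2), vv r p‖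
          + ‖∫ p in (π/2)..(π-ε), vv r p‖
          + ‖∫ p in (π-ε)..π, vv r p‖ := by
          have := norm_add_le (∫ p in (0:ℝ)..ε, vv r p) (∫ p in ε..(π/2), vv r p)
          linarith
      _ ≤ 10 * ε := by linarith
  linarith

lemma sqrt2_lt : Real.sqrt 2 < 3/2 := by
  rw [show (3/2:ℝ) = Real.sqrt ((3/2)^2) by rw [Real.sqrt_sq (by norm_num)]]
  apply Real.sqrt_lt_sqrt (by norm_num)
  norm_num

lemma two_rpow_eq : (2:ℝ) ^ (-(1/2) : ℝ) = (Real.sqrt 2)⁻¹ := by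
  rw [Real.rpow_neg (by norm_num), Real.sqrt_eq_rpow]

theorem stmt15 :
    ∃ C₁ : ℝ, ∀ r : ℝ,
      ‖∫ p in (-Real.pi)..Real.pi,
          (1 / (2 * Real.pi) : ℂ) * Complex.exp (-(Complex.I * (r : ℂ) * (Real.cos p : ℂ)))‖
        ≤ C₁ * (1 + |r|) ^ (-(1/2) : ℝ) := by
  refine ⟨5, fun r => ?_⟩
  have hpi := Real.pi_gt_three
  have hX : (0:ℝ) < (1 + |r|) ^ (-(1/2) : ℝ) :=
    Real.rpow_pos_of_pos (by positivity) _
  have hs2 := sqrt2_lt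
  have hs2pos : (0:ℝ) < Real.sqrt 2 := Real.sqrt_pos.2 (by norm_num)
  have hgoal : ‖∫ p in (-Real.pi)..Real.pi,
      (1 / (2 * Real.pi) : ℂ) * Complex.exp (-(Complex.I * (r : ℂ) * (Real.cos p : ℂ)))‖
      = 1/(2*π) * ‖∫ p in (-π)..π, vv r p‖ := by
    rw [intervalIntegral.integral_const_mul, norm_mul]
    congr 1
    rw [show ((1:ℂ)/(2*(π:ℝ))) = (((1/(2*π):ℝ)):ℂ) by push_cast; ring]
    rw [Complex.norm_real, Real.norm_eq_abs, abs_of_pos (by positivity)]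
  rw [hgoal]
  rcases le_or_gt 1 |r| with h1 | h1
  · have hb := main_bound r h1
    have hkey : |r| ^ (-(1/2):ℝ) ≤ Real.sqrt 2 * (1+|r|) ^ (-(1/2):ℝ) := by
      have hc : ((2:ℝ)*|r|) ^ (-(1/2):ℝ) ≤ (1+|r|) ^ (-(1/2):ℝ) :=
        Real.rpow_le_rpow_of_nonpos (by positivity) (by linarith) (by norm_num)
      have hmul : ((2:ℝ)*|r|) ^ (-(1/2):ℝ) = 2^(-(1/2):ℝ) * |r|^(-(1/2):ℝ) :=
        Real.mul_rpow (by norm_num) (abs_nonneg r)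
      rw [hmul, two_rpow_eq] at hc
      have := mul_le_mul_of_nonneg_left hc hs2pos.le
      rw [← mul_assoc, mul_inv_cancel₀ hs2pos.ne', one_mul] at this
      exact this
    have hrp : (0:ℝ) < |r| ^ (-(1/2):ℝ) := Real.rpow_pos_of_pos (by linarith) _
    calc 1/(2*π) * ‖∫ p in (-π)..π, vv r p‖
        ≤ 1/(2*π) * (20 * (|r| ^ (-(1/2):ℝ))) := by
          apply mul_le_mul_of_nonneg_left hb (by positivity)
      _ ≤ 1/(2*π) * (20 * (Real.sqrt 2 * (1+|r|) ^ (-(1/2):ℝ))) := by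
          apply mul_le_mul_of_nonneg_left (by linarith) (by positivity)
      _ ≤ 5 * (1 + |r|) ^ (-(1/2) : ℝ) := by
          rw [div_mul_eq_mul_div, one_mul, div_le_iff₀ (by positivity)]
          nlinarith [mul_pos hs2pos hX, mul_lt_mul_of_pos_right hs2 hX]
  · have hb := trivial_bound r (-π) π (by linarith)
    have hge : (2:ℝ)^(-(1/2):ℝ) ≤ (1+|r|)^(-(1/2):ℝ) :=
      Real.rpow_le_rpow_of_nonpos (by positivity) (by linarith) (by norm_num)
    rw [two_rpow_eq] at hge
    have hinv : (2:ℝ)/3 < (Real.sqrt 2)⁻¹ := by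
      rw [lt_inv_comm₀ (by norm_num) hs2pos]
      linarith
    calc 1/(2*π) * ‖∫ p in (-π)..π, vv r p‖
        ≤ 1/(2*π) * (π - -π) := by
          apply mul_le_mul_of_nonneg_left hb (by positivity)
      _ = 1 := by field_simp; ring
      _ ≤ 5 * (1 + |r|) ^ (-(1/2) : ℝ) := by nlinarith
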